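/- Let n = t(t+1)/2 + k with t ≥ 1 and 0 ≤ k ≤ t. Then X₄(n) = (t−1)·2^t + 1 + k·2^t, where X₄(n) = Σ_{j=1}^{n} 2^{f(j)} and f(j) is the largest m with j > m(m+1)/2. -/

import Mathlib

/-- `hanoiF j` is the largest nonnegative integer `m` with `j > m(m+1)/2`. -/
def hanoiF (j : ℕ) : ℕ := Nat.findGreatest (fun m => m * (m + 1) / 2 < j) j

/-- Frame–Stewart move count `X₄(n) = Σ_{j=1}^n 2^{f(j)}`. -/
def X4 (n : ℕ) : ℕ := ∑ j ∈ Finset.Icc 1 n, 2 ^ hanoiF j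

lemma tri_le (t : ℕ) : t ≤ t * (t + 1) / 2 := by
  have h : t * 2 ≤ t * (t + 1) := by
    rcases t with _ | s
    · simp
    · exact Nat.mul_le_mul_left _ (by omega)
  omega

lemma tri_mono {t s : ℕ} (h : t ≤ s) : t * (t + 1) / 2 ≤ s * (s + 1) / 2 := by
  have h2 : t * (t + 1) ≤ s * (s + 1) := Nat.mul_le_mul h (by omega)
  omega

lemma hF_eq (t j : ℕ) (h1 : t * (t + 1) / 2 < j) (h2 : j ≤ (t + 1) * (t + 2) / 2) :
    hanoiF j = t := by
  unfold hanoiF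
  rw [Nat.findGreatest_eq_iff]
  refine ⟨le_trans (le_trans (tri_le t) (le_of_lt h1)) le_rfl, fun _ => h1, ?_⟩
  intro m hm _ hP
  have := tri_mono (show t + 1 ≤ m by omega)
  have e : (t + 1) * (t + 1 + 1) = (t + 1) * (t + 2) := by ring
  omega

lemma X4_succ (n : ℕ) : X4 (n + 1) = X4 n + 2 ^ hanoiF (n + 1) := by
  unfold X4
  rw [Finset.sum_Icc_succ_top (by omega)]

lemma X4_add (t k : ℕ) (hk : k ≤ t + 1) :
    X4 (t * (t + 1) / 2 + k) = X4 (t * (t + 1) / 2) + k * 2 ^ t := by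
  induction k with
  | zero => simp
  | succ k ih =>
    rw [← Nat.add_assoc, X4_succ, ih (by omega), hF_eq t]
    · ring
    · omega
    · have : (t + 1) * (t + 2) / 2 = t * (t + 1) / 2 + t + 1 := by
        have : (t + 1) * (t + 2) = t * (t + 1) + 2 * (t + 1) := by ring
        omega
      omega

lemma X4_tri (t : ℕ) (ht : 1 ≤ t) : X4 (t * (t + 1) / 2) = (t - 1) * 2 ^ t + 1 := by
  induction t with
  | zero => omega
  | succ s ih =>
    rcases Nat.eq_or_lt_of_le ht with h | h
    · have : (1 : ℕ) * (1 + 1) / 2 = 1 := by norm_num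
      simp [← h]
      decide
    · have hs : 1 ≤ s := by omega
      have htri : (s + 1) * (s + 2) / 2 = s * (s + 1) / 2 + (s + 1) := by
        have : (s + 1) * (s + 2) = s * (s + 1) + 2 * (s + 1) := by ring
        omega
      have : (s + 1) * (s + 1 + 1) / 2 = s * (s + 1) / 2 + (s + 1) := by
        convert htri using 2
      rw [this, X4_add s (s + 1) le_rfl, ih hs]
      obtain ⟨r, rfl⟩ : ∃ r, s = r + 1 := ⟨s - 1, by omega⟩
      simp only [Nat.add_sub_cancel]
      ring

/-- For `n = t(t+1)/2 + k` with `t ≥ 1` and `0 ≤ k ≤ t`,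
`X₄(n) = (t−1)·2^t + 1 + k·2^t`. -/
theorem stmt_9 (t k : ℕ) (ht : 1 ≤ t) (hk : k ≤ t) :
    X4 (t * (t + 1) / 2 + k) = (t - 1) * 2 ^ t + 1 + k * 2 ^ t := by
  rw [X4_add t k (by omega), X4_tri t ht]
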